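/- Let d ≥ 1, let Ω ⊆ ℝ^d be a bounded measurable set, let ρ : ℝ^d → ℝ be a nonnegative integrable function, and define F(y_1,…,y_K) = ∫_Ω min_{k=1,…,K} ‖x − y_k‖² ρ(x) dx. Suppose (y_1,…,y_K) ∈ (ℝ^d)^K is a local minimizer of F, and that each tie-broken Voronoi cell V_k = {x ∈ Ω : ‖x − y_k‖ ≤ ‖x − y_j‖ for all j, and ‖x − y_k‖ < ‖x − y_j‖ for all j < k} satisfies ∫_{V_k} ρ(x) dx > 0. Then each generator coincides with the centroid of its own cell: y_k = (∫_{V_k} x ρ(x) dx)/(∫_{V_k} ρ(x) dx) for every k = 1, …, K, i.e. {V_k} is a centroidal Voronoi tessellation. -/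

import Mathlib

open MeasureTheory RealInnerProductSpace

/-- The tie-broken Euclidean Voronoi cell of the generator `y k` in `Ω`: points of `Ω`
whose Euclidean distance to `y k` is minimal among all generators, with ties assigned
to the smallest index. -/
def euclVoronoi {d K : ℕ} (Ω : Set (EuclideanSpace ℝ (Fin d)))
    (y : Fin K → EuclideanSpace ℝ (Fin d)) (k : Fin K) : Set (EuclideanSpace ℝ (Fin d)) :=
  {x ∈ Ω | (∀ j, ‖x - y k‖ ≤ ‖x - y j‖) ∧ ∀ j, j < k → ‖x - y k‖ < ‖x - y j‖}

private abbrev Euc (d : ℕ) := EuclideanSpace ℝ (Fin d)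

private lemma quad_coeff_zero {A B ε : ℝ} (hA : 0 ≤ A) (hε : 0 < ε)
    (h : ∀ t : ℝ, |t| < ε → 0 ≤ t ^ 2 * A - 2 * t * B) : B = 0 := by
  by_contra hB
  have hB' : 0 < |B| := abs_pos.mpr hB
  set δ : ℝ := min (ε / (|B| + 1)) (1 / (A + 1)) with hδdef
  have hδ0 : 0 < δ := lt_min (by positivity) (by positivity)
  have hδ1 : δ ≤ ε / (|B| + 1) := min_le_left _ _
  have hδ2 : δ ≤ 1 / (A + 1) := min_le_right _ _
  have habs : |B * δ| < ε := by
    rw [abs_mul, abs_of_pos hδ0]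
    have h1 : |B| * δ ≤ |B| * (ε / (|B| + 1)) := by gcongr
    have h2 : |B| * (ε / (|B| + 1)) < ε := by
      rw [mul_div_assoc', div_lt_iff₀ (by positivity)]
      nlinarith
    linarith
  have ht := h (B * δ) habs
  have hδA : δ * A < 2 := by
    have h1 : δ * A ≤ (1 / (A + 1)) * A := by gcongr
    have h2 : (1 / (A + 1)) * A < 2 := by
      rw [div_mul_eq_mul_div, div_lt_iff₀ (by positivity)]; nlinarith
    linarith
  have hB2 : 0 < B ^ 2 := by positivity
  nlinarith [mul_pos hB2 hδ0]

theorem stmt_14 (d K : ℕ) (hd : 1 ≤ d) (hK : 0 < K)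
    (Ω : Set (EuclideanSpace ℝ (Fin d)))
    (hΩb : Bornology.IsBounded Ω) (hΩm : MeasurableSet Ω)
    (ρ : EuclideanSpace ℝ (Fin d) → ℝ) (hρ0 : ∀ x, 0 ≤ ρ x) (hρi : Integrable ρ)
    (y : Fin K → EuclideanSpace ℝ (Fin d))
    (hmin : IsLocalMin
      (fun z : Fin K → EuclideanSpace ℝ (Fin d) =>
        ∫ x in Ω, (⨅ k, ‖x - z k‖) ^ 2 * ρ x) y)
    (hpos : ∀ k, 0 < ∫ x in euclVoronoi Ω y k, ρ x) :
    ∀ k, y k = (∫ z in euclVoronoi Ω y k, ρ z)⁻¹ • ∫ z in euclVoronoi Ω y k, ρ z • z := by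
  classical
  haveI : Nonempty (Fin K) := ⟨⟨0, hK⟩⟩
  -- boundedness of Ω
  obtain ⟨R, hR⟩ := hΩb.subset_closedBall 0
  set R0 : ℝ := max R 0 with hR0def
  have hR0 : 0 ≤ R0 := le_max_right _ _
  have hxR : ∀ x ∈ Ω, ‖x‖ ≤ R0 := by
    intro x hx
    have := hR hx
    rw [Metric.mem_closedBall, dist_zero_right] at this
    exact this.trans (le_max_left _ _)
  -- basic facts about the infimum
  have hbdd : ∀ (z : Fin K → Euc d) (x : Euc d), BddBelow (Set.range fun j => ‖x - z j‖) :=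
    fun z x => Set.Finite.bddBelow (Set.finite_range _)
  have hinf_nonneg : ∀ (z : Fin K → Euc d) (x : Euc d), 0 ≤ ⨅ j, ‖x - z j‖ :=
    fun z x => le_ciInf fun j => norm_nonneg _
  have hinf_le : ∀ (z : Fin K → Euc d) (x : Euc d) (j : Fin K),
      (⨅ i, ‖x - z i‖) ≤ ‖x - z j‖ := fun z x j => ciInf_le (hbdd z x) j
  have hcont : ∀ z : Fin K → Euc d, Continuous fun x : Euc d => ⨅ j, ‖x - z j‖ := by
    intro z
    have h2 : (fun x : Euc d => Finset.univ.inf' Finset.univ_nonempty fun j => ‖x - z j‖)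
        = fun x : Euc d => ⨅ j, ‖x - z j‖ := funext fun x => Finset.inf'_univ_eq_ciInf _
    rw [← h2]
    exact Continuous.finset_inf'_apply Finset.univ_nonempty
      fun j _ => (continuous_id.sub continuous_const).norm
  -- measurability of the Voronoi cells
  have hSm : ∀ k, MeasurableSet (euclVoronoi Ω y k) := by
    intro k
    have heq : euclVoronoi Ω y k =
        Ω ∩ ((⋂ j, {x : Euc d | ‖x - y k‖ ≤ ‖x - y j‖}) ∩
          ⋂ j ∈ {j : Fin K | j < k}, {x : Euc d | ‖x - y k‖ < ‖x - y j‖}) := by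
      ext x
      simp only [euclVoronoi, Set.mem_setOf_eq, Set.mem_inter_iff, Set.mem_iInter]
    rw [heq]
    refine hΩm.inter (MeasurableSet.inter ?_ ?_)
    · exact MeasurableSet.iInter fun j =>
        (isClosed_le ((continuous_id.sub continuous_const).norm)
          ((continuous_id.sub continuous_const).norm)).measurableSet
    · refine MeasurableSet.iInter fun j => MeasurableSet.iInter fun _ =>
        (isOpen_lt ((continuous_id.sub continuous_const).norm)
          ((continuous_id.sub continuous_const).norm)).measurableSet
  have hSsub : ∀ k, euclVoronoi Ω y k ⊆ Ω := fun k x hx => hx.1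
  -- every point of Ω lies in some cell
  have hcover : ∀ x ∈ Ω, ∃ j, x ∈ euclVoronoi Ω y j := by
    intro x hx
    obtain ⟨j0, -, hj0⟩ := Finset.exists_min_image Finset.univ (fun j => ‖x - y j‖)
      ⟨Classical.arbitrary (Fin K), Finset.mem_univ _⟩
    set s : Finset (Fin K) := Finset.univ.filter (fun j => ∀ i, ‖x - y j‖ ≤ ‖x - y i‖) with hs
    have hsne : s.Nonempty := ⟨j0, by
      simp only [hs, Finset.mem_filter, Finset.mem_univ, true_and]
      exact fun i => hj0 i (Finset.mem_univ _)⟩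
    have hmem := Finset.min'_mem s hsne
    simp only [hs, Finset.mem_filter, Finset.mem_univ, true_and] at hmem
    refine ⟨s.min' hsne, hx, hmem, ?_⟩
    intro j hj
    rcases lt_or_eq_of_le (hmem j) with h | h
    · exact h
    · exfalso
      have hjs : j ∈ s := by
        simp only [hs, Finset.mem_filter, Finset.mem_univ, true_and]
        intro i
        rw [← h]; exact hmem i
      exact absurd (Finset.min'_le s j hjs) (not_le.mpr hj)
  -- integrability toolkit
  have hρm : AEStronglyMeasurable ρ (volume : Measure (Euc d)) := hρi.aestronglyMeasurable
  have hIntOn : ∀ (T : Set (Euc d)), MeasurableSet T → T ⊆ Ω → ∀ (C : ℝ) (f : Euc d → ℝ),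
      AEStronglyMeasurable f (volume.restrict T) → (∀ x ∈ T, |f x| ≤ C * ρ x) →
      IntegrableOn f T := by
    intro T hTm hTsub C f hfm hbound
    refine Integrable.mono' ((hρi.integrableOn (s := T)).const_mul C) hfm ?_
    refine (ae_restrict_iff' hTm).2 (Filter.Eventually.of_forall fun x hx => ?_)
    simpa [Real.norm_eq_abs] using hbound x hx
  intro k
  set S : Set (Euc d) := euclVoronoi Ω y k with hSdef
  set M : ℝ := ∫ z in S, ρ z with hMdef
  have hM : 0 < M := hpos k
  set cvec : Euc d := ∫ z in S, ρ z • z with hcvec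
  -- integrability of ρ • x on S
  have hρx : IntegrableOn (fun x : Euc d => ρ x • x) S := by
    refine Integrable.mono' ((hρi.integrableOn (s := S)).const_mul R0)
      (hρm.restrict.smul aestronglyMeasurable_id) ?_
    refine (ae_restrict_iff' (hSm k)).2 (Filter.Eventually.of_forall fun x hx => ?_)
    rw [norm_smul, Real.norm_eq_abs, abs_of_nonneg (hρ0 x)]
    have := hxR x (hSsub k hx)
    calc ρ x * ‖x‖ ≤ ρ x * R0 := by gcongr; exact hρ0 x
      _ = R0 * ρ x := mul_comm _ _
  -- the key vector
  set w : Euc d := cvec - M • y k with hwdef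
  have hw : w = 0 := by
    -- we show ⟪v, w⟫ = 0 for every v
    suffices hv : ∀ v : Euc d, ⟪v, w⟫ = 0 by
      have := hv w
      rwa [inner_self_eq_zero] at this
    intro v
    -- the perturbation curve
    set c : ℝ → (Fin K → Euc d) := fun t => Function.update y k (y k + t • v) with hcdef
    have hccont : Continuous c := by
      refine continuous_pi fun j => ?_
      by_cases hj : j = k
      · subst hj
        simpa [hcdef, Function.update_self] using
          (show Continuous fun t : ℝ => y j + t • v from continuous_const.add ((continuous_id : Continuous fun t : ℝ => t).smul continuous_const))
      · simpa [hcdef, Function.update_of_ne hj] using continuous_const (y := y j)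
    have hc0 : c 0 = y := by
      funext j
      by_cases hj : j = k
      · subst hj; simp [hcdef]
      · simp [hcdef, Function.update_of_ne hj]
    -- local minimality along the curve
    have hT : Filter.Tendsto c (nhds 0) (nhds y) := by
      have := hccont.tendsto 0
      rwa [hc0] at this
    have hev : ∀ᶠ t in nhds (0 : ℝ),
        (∫ x in Ω, (⨅ j, ‖x - y j‖) ^ 2 * ρ x)
          ≤ ∫ x in Ω, (⨅ j, ‖x - c t j‖) ^ 2 * ρ x := hT.eventually hmin
    -- integrability of the main integrands
    have hIntInf : ∀ z : Fin K → Euc d,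
        IntegrableOn (fun x : Euc d => (⨅ j, ‖x - z j‖) ^ 2 * ρ x) Ω := by
      intro z
      refine hIntOn Ω hΩm le_rfl ((R0 + ‖z k‖) ^ 2) _
        ((((hcont z).pow 2).aestronglyMeasurable.restrict.mul hρm.restrict)) ?_
      intro x hx
      have h1 : (⨅ j, ‖x - z j‖) ≤ R0 + ‖z k‖ := by
        refine (hinf_le z x k).trans ?_
        calc ‖x - z k‖ ≤ ‖x‖ + ‖z k‖ := norm_sub_le _ _
          _ ≤ R0 + ‖z k‖ := by gcongr; exact hxR x hx
      have h2 : 0 ≤ (⨅ j, ‖x - z j‖) := hinf_nonneg z x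
      rw [abs_of_nonneg (mul_nonneg (by positivity) (hρ0 x))]
      have h3 : (⨅ j, ‖x - z j‖) ^ 2 ≤ (R0 + ‖z k‖) ^ 2 := pow_le_pow_left₀ h2 h1 2
      exact mul_le_mul_of_nonneg_right h3 (hρ0 x)
    -- integrability of the inner-product integrand on S
    have hIntIP : IntegrableOn (fun x : Euc d => ⟪v, x - y k⟫ * ρ x) S := by
      refine hIntOn S (hSm k) (hSsub k) (‖v‖ * (R0 + ‖y k‖)) _
        (((continuous_const.inner (continuous_id.sub continuous_const)).aestronglyMeasurable.restrict.mul
          hρm.restrict)) ?_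
      intro x hx
      rw [abs_mul, abs_of_nonneg (hρ0 x)]
      have h1 : |⟪v, x - y k⟫| ≤ ‖v‖ * ‖x - y k‖ := abs_real_inner_le_norm _ _
      have h2 : ‖x - y k‖ ≤ R0 + ‖y k‖ := by
        calc ‖x - y k‖ ≤ ‖x‖ + ‖y k‖ := norm_sub_le _ _
          _ ≤ R0 + ‖y k‖ := by gcongr; exact hxR x (hSsub k hx)
      refine mul_le_mul_of_nonneg_right (h1.trans ?_) (hρ0 x)
      exact mul_le_mul_of_nonneg_left h2 (norm_nonneg v)
    -- the Δ-integrand on S and its integral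
    have hctk : ∀ t : ℝ, c t k = y k + t • v := fun t => by simp [hcdef]
    have hctj : ∀ (t : ℝ) (j : Fin K), j ≠ k → c t j = y j := fun t j hj => by
      simp [hcdef, Function.update_of_ne hj]
    have hIntΔ : ∀ t : ℝ, IntegrableOn
        (fun x : Euc d => (t ^ 2 * ‖v‖ ^ 2 - 2 * t * ⟪v, x - y k⟫) * ρ x) S := by
      intro t
      have heq : (fun x : Euc d => (t ^ 2 * ‖v‖ ^ 2 - 2 * t * ⟪v, x - y k⟫) * ρ x)
          = fun x : Euc d => (t ^ 2 * ‖v‖ ^ 2) * ρ x - (2 * t) * (⟪v, x - y k⟫ * ρ x) := by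
        funext x; ring
      rw [heq]
      exact ((hρi.integrableOn (s := S)).const_mul _).sub (hIntIP.const_mul _)
    have hΔint : ∀ t : ℝ,
        (∫ x in S, (t ^ 2 * ‖v‖ ^ 2 - 2 * t * ⟪v, x - y k⟫) * ρ x)
          = t ^ 2 * (‖v‖ ^ 2 * M) - 2 * t * ⟪v, w⟫ := by
      intro t
      have heq : (fun x : Euc d => (t ^ 2 * ‖v‖ ^ 2 - 2 * t * ⟪v, x - y k⟫) * ρ x)
          = fun x : Euc d => (t ^ 2 * ‖v‖ ^ 2) * ρ x - (2 * t) * (⟪v, x - y k⟫ * ρ x) := by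
        funext x; ring
      rw [heq, integral_sub ((hρi.integrableOn (s := S)).const_mul _) (hIntIP.const_mul _),
        integral_const_mul, integral_const_mul]
      have hip : (∫ x in S, ⟪v, x - y k⟫ * ρ x) = ⟪v, w⟫ := by
        have h1 : (fun x : Euc d => ⟪v, x - y k⟫ * ρ x)
            = fun x : Euc d => ⟪v, ρ x • x⟫ - ⟪v, y k⟫ * ρ x := by
          funext x
          rw [inner_sub_right, real_inner_smul_right]
          ring
        rw [h1, integral_sub (hρx.const_inner v) ((hρi.integrableOn (s := S)).const_mul _),
          integral_inner hρx, integral_const_mul]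
        rw [hwdef, inner_sub_right, real_inner_smul_right, ← hcvec, ← hMdef]
        ring
      rw [hip]
      ring
    -- the key comparison inequality
    have key : ∀ t : ℝ,
        (∫ x in Ω, (⨅ j, ‖x - c t j‖) ^ 2 * ρ x)
          ≤ (∫ x in Ω, (⨅ j, ‖x - y j‖) ^ 2 * ρ x)
            + (t ^ 2 * (‖v‖ ^ 2 * M) - 2 * t * ⟪v, w⟫) := by
      intro t
      have hgS : Integrable (fun x : Euc d => (t ^ 2 * ‖v‖ ^ 2 - 2 * t * ⟪v, x - y k⟫) * ρ x)
          (((volume : Measure (Euc d)).restrict Ω).restrict S) := by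
        rw [Measure.restrict_restrict (hSm k), Set.inter_eq_self_of_subset_left (hSsub k)]
        exact hIntΔ t
      have hgΩ : IntegrableOn
          (S.indicator fun x : Euc d => (t ^ 2 * ‖v‖ ^ 2 - 2 * t * ⟪v, x - y k⟫) * ρ x) Ω :=
        (integrable_indicator_iff (hSm k)).2 hgS
      have hpt : ∀ x ∈ Ω, (⨅ j, ‖x - c t j‖) ^ 2 * ρ x
          ≤ (⨅ j, ‖x - y j‖) ^ 2 * ρ x
            + S.indicator (fun x : Euc d => (t ^ 2 * ‖v‖ ^ 2 - 2 * t * ⟪v, x - y k⟫) * ρ x) x := by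
        intro x hx
        by_cases hxS : x ∈ S
        · rw [Set.indicator_of_mem hxS]
          have hinfy : (⨅ j, ‖x - y j‖) = ‖x - y k‖ :=
            le_antisymm (hinf_le y x k) (le_ciInf hxS.2.1)
          have hle : (⨅ j, ‖x - c t j‖) ≤ ‖x - (y k + t • v)‖ := by
            have h := hinf_le (c t) x k
            rwa [hctk t] at h
          have hexp : ‖x - (y k + t • v)‖ ^ 2
              = ‖x - y k‖ ^ 2 + (t ^ 2 * ‖v‖ ^ 2 - 2 * t * ⟪v, x - y k⟫) := by
            have h1 : x - (y k + t • v) = (x - y k) - t • v := by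
              rw [sub_add_eq_sub_sub]
            rw [h1, norm_sub_sq_real, real_inner_smul_right, norm_smul,
              Real.norm_eq_abs, mul_pow, sq_abs, real_inner_comm]
            ring
          calc (⨅ j, ‖x - c t j‖) ^ 2 * ρ x
              ≤ ‖x - (y k + t • v)‖ ^ 2 * ρ x :=
                mul_le_mul_of_nonneg_right
                  (pow_le_pow_left₀ (hinf_nonneg _ x) hle 2) (hρ0 x)
            _ = (⨅ j, ‖x - y j‖) ^ 2 * ρ x
                + (t ^ 2 * ‖v‖ ^ 2 - 2 * t * ⟪v, x - y k⟫) * ρ x := by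
                rw [hexp, hinfy]; ring
        · rw [Set.indicator_of_notMem hxS, add_zero]
          obtain ⟨j, hj⟩ := hcover x hx
          have hjk : j ≠ k := by
            intro h
            subst h
            exact hxS hj
          have hinfy : (⨅ i, ‖x - y i‖) = ‖x - y j‖ :=
            le_antisymm (hinf_le y x j) (le_ciInf hj.2.1)
          have hle : (⨅ i, ‖x - c t i‖) ≤ ⨅ i, ‖x - y i‖ := by
            rw [hinfy]
            have h := hinf_le (c t) x j
            rwa [hctj t j hjk] at h
          exact mul_le_mul_of_nonneg_right
            (pow_le_pow_left₀ (hinf_nonneg _ x) hle 2) (hρ0 x)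
      have hmono : (∫ x in Ω, (⨅ j, ‖x - c t j‖) ^ 2 * ρ x)
          ≤ ∫ x in Ω, ((⨅ j, ‖x - y j‖) ^ 2 * ρ x
            + S.indicator (fun x : Euc d => (t ^ 2 * ‖v‖ ^ 2 - 2 * t * ⟪v, x - y k⟫) * ρ x) x) :=
        setIntegral_mono_on (hIntInf (c t)) ((hIntInf y).add hgΩ) hΩm hpt
      refine le_trans hmono (le_of_eq ?_)
      rw [integral_add (hIntInf y) hgΩ, setIntegral_indicator (hSm k),
        Set.inter_eq_self_of_subset_right (hSsub k), hΔint t]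
    -- combine with local minimality
    have hev2 : ∀ᶠ t in nhds (0 : ℝ),
        0 ≤ t ^ 2 * (‖v‖ ^ 2 * M) - 2 * t * ⟪v, w⟫ := by
      filter_upwards [hev] with t ht
      have h := key t
      linarith
    obtain ⟨ε, hε, hball⟩ := Metric.eventually_nhds_iff.1 hev2
    refine quad_coeff_zero (mul_nonneg (sq_nonneg _) hM.le) hε fun t ht => hball ?_
    simpa [Real.dist_eq] using ht
  -- conclude
  have hc : cvec = M • y k := by
    have h := hw
    rw [hwdef, sub_eq_zero] at h
    exact h
  rw [hc, smul_smul, inv_mul_cancel₀ (ne_of_gt hM), one_smul]
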